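/- arXiv:1406.6136 — 2 statements merged into one kernel-verified Lean document; each statement's English description precedes it below -/
import Mathlib

section
/- Let n ≥ 0 and let Q = (Q₀,Q₁,ρ) be a bound quiver with homogeneous relations, equipped with subsets 𝒫, ℐ ⊆ Q₀ and a bijection τ: Q₀∖𝒫 → Q₀∖ℐ satisfying conditions (1) and (2) of the definition of an n-translation quiver, and let Λ = k(Q). Then conditions (3) and (4) of that definition hold if and only if: for each i ∈ Q₀∖𝒫 and each j ∈ Q₀ such that there is a bound path from j to i of length t or a bound path from τi to j of length n+1−t, the multiplication of Λ defines a non-degenerate bilinear form e_iΛ_t e_j × e_jΛ_{n+1−t} e_{τi} → e_iΛ_{n+1} e_{τi}. -/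
namespace NTranslation

/-- Paths in a quiver with vertex set `V` and arrow spaces `Arr i j`. -/
inductive PathIn {V : Type} (Arr : V → V → Type) : V → V → Type
  | nil (i : V) : PathIn Arr i i
  | cons {i j l : V} (p : PathIn Arr i j) (a : Arr j l) : PathIn Arr i l

namespace PathIn

variable {V : Type} {Arr : V → V → Type}

/-- The length of a path. -/
def length : ∀ {i j : V}, PathIn Arr i j → ℕ
  | _, _, .nil _ => 0
  | _, _, .cons p _ => p.length + 1

/-- Composition of paths (`p.comp q` is `p` followed by `q`). -/
def comp : ∀ {i j l : V}, PathIn Arr i j → PathIn Arr j l → PathIn Arr i l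
  | _, _, _, p, .nil _ => p
  | _, _, _, p, .cons q a => .cons (p.comp q) a

/-- The set of vertices visited by a path (including both end points). -/
def mentions : ∀ {i j : V}, PathIn Arr i j → V → Prop
  | i, _, .nil _, v => v = i
  | _, _, .cons (l := l) p _, v => p.mentions v ∨ v = l

/-- Relabel the arrows of a path along a map of arrow families. -/
def mapArr {Arr' : V → V → Type} (φ : ∀ a b : V, Arr a b → Arr' a b) :
    ∀ {i j : V}, PathIn Arr i j → PathIn Arr' i j
  | _, _, .nil i => .nil i
  | _, _, .cons (j := a) (l := b) p x => .cons (p.mapArr φ) (φ a b x)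

end PathIn

section PathPresentation

variable (k : Type) [Field k]
variable (V : Type) (Arr : V → V → Type)
variable (A : Type) [Ring A] [Algebra k A]
variable (e : V → A) (arr : ∀ i j, Arr i j → A)

/-- Evaluation of a path in the algebra `A` (arrows composed left of earlier
arrows; a trivial path evaluates to the corresponding idempotent). -/
noncomputable def evalPath : ∀ {i j : V}, PathIn Arr i j → A
  | _, _, .nil i => e i
  | _, _, .cons (j := j) (l := l) p a => arr j l a * evalPath p

/-- A formal `k`-linear combination of paths from `i` to `j`. -/
abbrev Comb (i j : V) := PathIn Arr i j →₀ k

/-- Evaluation of a formal linear combination of paths in `A`. -/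
noncomputable def evalComb {i j : V} (u : Comb k V Arr i j) : A :=
  u.sum fun p c => c • evalPath V Arr A e arr p

/-- Evaluation of a formal linear combination of arrows in `A`. -/
noncomputable def evalArrComb {i j : V} (u : Arr i j →₀ k) : A :=
  u.sum fun a c => c • arr i j a

/-- `u` is a homogeneous combination of paths of length `t` from `i` to `j`
which is a *bound element*, i.e. has nonzero image in the algebra. -/
noncomputable def IsBoundElement {i j : V} (u : Comb k V Arr i j) (t : ℕ) : Prop :=
  (∀ p ∈ u.support, PathIn.length p = t) ∧ evalComb k V Arr A e arr u ≠ 0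

/-- The span of the images of the paths of length `t` in `A`. -/
noncomputable def pathDegSpan (t : ℕ) : Submodule k A :=
  Submodule.span k {x : A |
    ∃ (i j : V) (p : PathIn Arr i j), p.length = t ∧ evalPath V Arr A e arr p = x}

/-- The span of the images of the paths of length `t` from `j` to `i`
(the corner space `e_i Λ_t e_j`). -/
noncomputable def pathCornerSpan (i j : V) (t : ℕ) : Submodule k A :=
  Submodule.span k {x : A |
    ∃ p : PathIn Arr j i, p.length = t ∧ evalPath V Arr A e arr p = x}

/-- The `(i,j)`-component of the two-sided ideal of the path algebra generated
by the relation set `ρ`, described as the span of the relations composed with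
paths on both sides. -/
noncomputable def extendedRelations (ρ : ∀ i j : V, Set (Comb k V Arr i j))
    (i j : V) : Submodule k (Comb k V Arr i j) :=
  Submodule.span k {z : Comb k V Arr i j |
    ∃ (a b : V) (r : Comb k V Arr a b) (_ : r ∈ ρ a b)
      (v : PathIn Arr i a) (w : PathIn Arr b j),
      z = Finsupp.mapDomain (fun p => (v.comp p).comp w) r}

/-- `(A, e, arr)` realizes the bound quiver algebra `k(Q) = kQ/(ρ)` of the
bound quiver `Q = (V, Arr, ρ)` with homogeneous relations. -/
structure IsBoundQuiverAlgebra (ρ : ∀ i j : V, Set (Comb k V Arr i j)) : Prop where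
  idem : ∀ i, e i * e i = e i
  orth : ∀ i j, i ≠ j → e i * e j = 0
  e_ne : ∀ i, e i ≠ 0
  arr_comp : ∀ (i j : V) (a : Arr i j), e j * arr i j a * e i = arr i j a
  locFin : ∀ i j : V, Finite (Arr i j)
  spanning : pathDegSpan k V Arr A e arr 0 = Submodule.span k (Set.range e)
  graded : DirectSum.IsInternal (pathDegSpan k V Arr A e arr)
  homog : ∀ (i j : V), ∀ r ∈ ρ i j,
    ∃ t : ℕ, 2 ≤ t ∧ ∀ p ∈ r.support, PathIn.length p = t
  kernel : ∀ (i j : V) (u : Comb k V Arr i j),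
    evalComb k V Arr A e arr u = 0 ↔ u ∈ extendedRelations k V Arr ρ i j

/-- The bound quiver `(V, Arr, ρ)`, realized by the algebra `(A, e, arr)`,
together with `(𝒫, ℐ, τ)`, is an `n`-translation quiver. -/
structure IsNTranslationQuiver (n : ℕ) (P I : Set V) (τ : V → V) : Prop where
  bij : Set.BijOn τ Pᶜ Iᶜ
  /- (1a): for each non-projective `i` there is a bound path of length `n+1`
  from `τ i` to `i`. -/
  exists_max : ∀ i ∉ P, ∃ p : PathIn Arr (τ i) i,
    p.length = n + 1 ∧ evalPath V Arr A e arr p ≠ 0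
  /- (1b): every maximal bound path has length `n+1` and runs from `τ i` to `i`
  for some non-projective `i`. -/
  max_bound : ∀ (a b : V) (p : PathIn Arr a b), evalPath V Arr A e arr p ≠ 0 →
    (∀ (c : V) (α : Arr b c), arr b c α * evalPath V Arr A e arr p = 0) →
    (∀ (c : V) (α : Arr c a), evalPath V Arr A e arr p * arr c a α = 0) →
    ∃ i, i ∉ P ∧ a = τ i ∧ b = i ∧ p.length = n + 1
  /- (2): two bound paths of length `n+1` from `τ i` to `i` are linearly
  dependent. -/
  lin_dep : ∀ i ∉ P, ∀ (p q : PathIn Arr (τ i) i),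
    p.length = n + 1 → q.length = n + 1 →
    ∃ c d : k, ¬ (c = 0 ∧ d = 0) ∧
      c • evalPath V Arr A e arr p + d • evalPath V Arr A e arr q = 0
  /- (3) -/
  cond3 : ∀ i ∉ P, ∀ (j : V) (t : ℕ), t ≤ n + 1 →
    ∀ u : Comb k V Arr j i, IsBoundElement k V Arr A e arr u t →
      ∃ q : PathIn Arr (τ i) j, q.length + t = n + 1 ∧
        evalComb k V Arr A e arr u * evalPath V Arr A e arr q ≠ 0
  /- (4) -/
  cond4 : ∀ i ∉ I, ∀ (j : V) (t : ℕ), t ≤ n + 1 →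
    ∀ u : Comb k V Arr i j, IsBoundElement k V Arr A e arr u t →
      ∃ i', i' ∉ P ∧ τ i' = i ∧ ∃ p : PathIn Arr j i', p.length + t = n + 1 ∧
        evalPath V Arr A e arr p * evalComb k V Arr A e arr u ≠ 0

end PathPresentation
end NTranslation

namespace NTranslation
section Helpers

variable {k : Type} [Field k] {V : Type} {Arr : V → V → Type}
  {A : Type} [Ring A] [Algebra k A] {e : V → A} {arr : ∀ i j : V, Arr i j → A}

lemma evalComb_mem_cornerSpan {i j : V} {t : ℕ} (u : Comb k V Arr j i)
    (hu : ∀ p ∈ u.support, PathIn.length p = t) :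
    evalComb k V Arr A e arr u ∈ pathCornerSpan k V Arr A e arr i j t := by
  rw [evalComb, Finsupp.sum]
  exact Submodule.sum_mem _ fun p hp =>
    Submodule.smul_mem _ _ (Submodule.subset_span ⟨p, hu p hp, rfl⟩)

lemma exists_comb_of_mem_cornerSpan {i j : V} {t : ℕ} {x : A}
    (hx : x ∈ pathCornerSpan k V Arr A e arr i j t) :
    ∃ u : Comb k V Arr j i, (∀ p ∈ u.support, PathIn.length p = t) ∧
      evalComb k V Arr A e arr u = x := by
  classical
  induction hx using Submodule.span_induction with
  | mem x hx =>
    obtain ⟨p, hp, rfl⟩ := hx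
    refine ⟨Finsupp.single p 1, fun q hq => ?_, ?_⟩
    · have := Finsupp.support_single_subset hq
      simp only [Finset.mem_singleton] at this
      subst this; exact hp
    · rw [evalComb, Finsupp.sum_single_index (by simp), one_smul]
  | zero => exact ⟨0, by simp, by simp [evalComb]⟩
  | add x y _ _ hx hy =>
    obtain ⟨u, hu, rfl⟩ := hx
    obtain ⟨v, hv, rfl⟩ := hy
    refine ⟨u + v, fun p hp => ?_, ?_⟩
    · rcases Finset.mem_union.1 (Finsupp.support_add hp) with h | h
      · exact hu p h
      · exact hv p h
    · simp only [evalComb]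
      exact Finsupp.sum_add_index' (fun p => zero_smul k _) (fun p b c => add_smul b c _)
  | smul c x _ hx =>
    obtain ⟨u, hu, rfl⟩ := hx
    refine ⟨c • u, fun p hp => hu p (Finsupp.support_smul hp), ?_⟩
    exact map_smul (Finsupp.lsum k fun p =>
      LinearMap.toSpanSingleton k A (evalPath V Arr A e arr p)) c u

lemma exists_path_of_mul_ne {i j : V} {x : A} (u : Comb k V Arr i j)
    (h : x * evalComb k V Arr A e arr u ≠ 0) :
    ∃ p ∈ u.support, x * evalPath V Arr A e arr p ≠ 0 := by
  by_contra hc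
  push_neg at hc
  apply h
  rw [evalComb, Finsupp.sum, Finset.mul_sum]
  exact Finset.sum_eq_zero fun p hp => by
    rw [mul_smul_comm, hc p hp, smul_zero]

lemma exists_path_of_ne_mul {i j : V} {y : A} (u : Comb k V Arr i j)
    (h : evalComb k V Arr A e arr u * y ≠ 0) :
    ∃ p ∈ u.support, evalPath V Arr A e arr p * y ≠ 0 := by
  by_contra hc
  push_neg at hc
  apply h
  rw [evalComb, Finsupp.sum, Finset.sum_mul]
  exact Finset.sum_eq_zero fun p hp => by
    rw [smul_mul_assoc, hc p hp, smul_zero]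

lemma exists_path_of_evalComb_ne {i j : V} (u : Comb k V Arr i j)
    (h : evalComb k V Arr A e arr u ≠ 0) :
    ∃ p ∈ u.support, evalPath V Arr A e arr p ≠ 0 := by
  obtain ⟨p, hp, hne⟩ := exists_path_of_ne_mul (y := (1 : A)) u (by
    rwa [mul_one])
  exact ⟨p, hp, fun h0 => hne (by rw [h0, zero_mul])⟩

end Helpers
end NTranslation

open NTranslation in
/-- **Lemma `nondegbil`.**  Let `Q = (Q₀, Q₁, ρ)` be a bound
quiver with homogeneous relations satisfying conditions (1) and (2) of the
definition of an `n`-translation quiver, realized by `Λ = k(Q)`.  Then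
conditions (3) and (4) hold if and only if for each `i ∉ 𝒫` and each `j`
such that there is a bound path from `j` to `i` of length `t` or a bound path
from `τ i` to `j` of length `n+1-t`, the multiplication of `Λ` defines a
non-degenerate bilinear form
`e_iΛ_t e_j × e_jΛ_{n+1-t} e_{τi} → e_iΛ_{n+1}e_{τi}`. -/
theorem translation_conditions_iff_nondegenerate_pairing
    (k : Type) [Field k] (V : Type) (Arr : V → V → Type)
    (A : Type) [Ring A] [Algebra k A]
    (e : V → A) (arr : ∀ i j : V, Arr i j → A)
    (ρ : ∀ i j : V, Set (Comb k V Arr i j))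
    (hpres : IsBoundQuiverAlgebra k V Arr A e arr ρ)
    (n : ℕ) (P I : Set V) (τ : V → V)
    (hbij : Set.BijOn τ Pᶜ Iᶜ)
    (h1a : ∀ i ∉ P, ∃ p : PathIn Arr (τ i) i,
      p.length = n + 1 ∧ evalPath V Arr A e arr p ≠ 0)
    (h1b : ∀ (a b : V) (p : PathIn Arr a b), evalPath V Arr A e arr p ≠ 0 →
      (∀ (c : V) (α : Arr b c), arr b c α * evalPath V Arr A e arr p = 0) →
      (∀ (c : V) (α : Arr c a), evalPath V Arr A e arr p * arr c a α = 0) →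
      ∃ i, i ∉ P ∧ a = τ i ∧ b = i ∧ p.length = n + 1)
    (h2 : ∀ i ∉ P, ∀ (p q : PathIn Arr (τ i) i),
      p.length = n + 1 → q.length = n + 1 →
      ∃ c d : k, ¬ (c = 0 ∧ d = 0) ∧
        c • evalPath V Arr A e arr p + d • evalPath V Arr A e arr q = 0) :
    ((∀ i ∉ P, ∀ (j : V) (t : ℕ), t ≤ n + 1 →
        ∀ u : Comb k V Arr j i, IsBoundElement k V Arr A e arr u t →
          ∃ q : PathIn Arr (τ i) j, q.length + t = n + 1 ∧
            evalComb k V Arr A e arr u * evalPath V Arr A e arr q ≠ 0) ∧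
     (∀ i ∉ I, ∀ (j : V) (t : ℕ), t ≤ n + 1 →
        ∀ u : Comb k V Arr i j, IsBoundElement k V Arr A e arr u t →
          ∃ i', i' ∉ P ∧ τ i' = i ∧
            ∃ p : PathIn Arr j i', p.length + t = n + 1 ∧
              evalPath V Arr A e arr p * evalComb k V Arr A e arr u ≠ 0))
    ↔
    (∀ i ∉ P, ∀ (j : V) (t : ℕ), t ≤ n + 1 →
      ((∃ p : PathIn Arr j i, p.length = t ∧ evalPath V Arr A e arr p ≠ 0) ∨
       (∃ q : PathIn Arr (τ i) j, q.length + t = n + 1 ∧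
          evalPath V Arr A e arr q ≠ 0)) →
      ((∀ x ∈ pathCornerSpan k V Arr A e arr i j t, x ≠ 0 →
          ∃ y ∈ pathCornerSpan k V Arr A e arr j (τ i) (n + 1 - t), x * y ≠ 0) ∧
       (∀ y ∈ pathCornerSpan k V Arr A e arr j (τ i) (n + 1 - t), y ≠ 0 →
          ∃ x ∈ pathCornerSpan k V Arr A e arr i j t, x * y ≠ 0))) := by
  constructor
  · rintro ⟨c3, c4⟩ i hi j t ht _
    constructor
    · intro x hx hx0
      obtain ⟨u, hsupp, rfl⟩ := exists_comb_of_mem_cornerSpan hx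
      obtain ⟨q, hq, hne⟩ := c3 i hi j t ht u ⟨hsupp, hx0⟩
      exact ⟨evalPath V Arr A e arr q,
        Submodule.subset_span ⟨q, by omega, rfl⟩, hne⟩
    · intro y hy hy0
      obtain ⟨u, hsupp, rfl⟩ := exists_comb_of_mem_cornerSpan hy
      obtain ⟨i', hi', hτ, p, hlen, hne⟩ :=
        c4 (τ i) (hbij.mapsTo hi) j (n + 1 - t) (by omega) u ⟨hsupp, hy0⟩
      have hii : i' = i := hbij.injOn hi' hi hτ
      subst hii
      have hlp : p.length = t := (Nat.eq_sub_of_add_eq hlen).trans (Nat.sub_sub_self ht)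
      exact ⟨evalPath V Arr A e arr p,
        Submodule.subset_span ⟨p, hlp, rfl⟩, hne⟩
  · intro H
    constructor
    · intro i hi j t ht u ⟨hsupp, hune⟩
      obtain ⟨p0, hp0, hp0ne⟩ := exists_path_of_evalComb_ne u hune
      obtain ⟨hL, _⟩ := H i hi j t ht (Or.inl ⟨p0, hsupp p0 hp0, hp0ne⟩)
      obtain ⟨y, hy, hxy⟩ := hL _ (evalComb_mem_cornerSpan u hsupp) hune
      obtain ⟨v, hvsupp, rfl⟩ := exists_comb_of_mem_cornerSpan hy
      obtain ⟨q, hq, hqne⟩ := exists_path_of_mul_ne v hxy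
      exact ⟨q, by have := hvsupp q hq; omega, hqne⟩
    · intro i hiI j t ht u ⟨hsupp, hune⟩
      obtain ⟨i', hi', rfl⟩ := hbij.surjOn hiI
      obtain ⟨q0, hq0, hq0ne⟩ := exists_path_of_evalComb_ne u hune
      have htt : n + 1 - (n + 1 - t) = t := by omega
      obtain ⟨_, hR⟩ := H i' hi' j (n + 1 - t) (by omega)
        (Or.inr ⟨q0, by have := hsupp q0 hq0; omega, hq0ne⟩)
      rw [htt] at hR
      obtain ⟨x, hx, hxy⟩ := hR _ (evalComb_mem_cornerSpan u hsupp) hune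
      obtain ⟨w, hwsupp, rfl⟩ := exists_comb_of_mem_cornerSpan hx
      obtain ⟨p, hp, hpne⟩ := exists_path_of_ne_mul w hxy
      have hlenp := hwsupp p hp
      exact ⟨i', hi', rfl, p, by omega, hpne⟩
end

section
/- Let Q be an n-translation quiver with translation τ, let Λ = k(Q), and for each i ∈ Q₀∖𝒫 fix a bound path p_i of length n+1 from τi to i. Then for any i, j ∈ Q₀∖𝒫 there is an isomorphism of vector spaces τ(i,j): e_j kQ₁ e_i → e_{τj} kQ₁ e_{τi} such that for any path p of length n and any arrow α ∈ e_j kQ₁ e_i satisfying αp = p_j in Λ, one has p·τ(i,j)(α) = p_i in Λ. -/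
namespace NTranslation

/-! ### Auxiliary lemmas -/

theorem PathIn.length_comp {V : Type} {Arr : V → V → Type}
    {i j l : V} (p : PathIn Arr i j) (q : PathIn Arr j l) :
    (p.comp q).length = p.length + q.length := by
  induction q with
  | nil => simp [PathIn.comp, PathIn.length]
  | cons q a ih => simp only [PathIn.comp, PathIn.length, ih]; omega

section AuxEval

variable {k : Type} [Field k] {V : Type} {Arr : V → V → Type}
  {A : Type} [Ring A] [Algebra k A] {e : V → A} {arr : ∀ i j, Arr i j → A}

theorem e_mul_arr (hidem : ∀ i, e i * e i = e i)
    (harr : ∀ (i j : V) (a : Arr i j), e j * arr i j a * e i = arr i j a)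
    (i j : V) (a : Arr i j) : e j * arr i j a = arr i j a := by
  calc e j * arr i j a = e j * (e j * arr i j a * e i) := by rw [harr]
    _ = e j * e j * arr i j a * e i := by simp only [mul_assoc]
    _ = e j * arr i j a * e i := by rw [hidem]
    _ = arr i j a := harr i j a

theorem arr_mul_e (hidem : ∀ i, e i * e i = e i)
    (harr : ∀ (i j : V) (a : Arr i j), e j * arr i j a * e i = arr i j a)
    (i j : V) (a : Arr i j) : arr i j a * e i = arr i j a := by
  calc arr i j a * e i = e j * arr i j a * e i * e i := by rw [harr]
    _ = e j * arr i j a * (e i * e i) := by simp only [mul_assoc]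
    _ = e j * arr i j a * e i := by rw [hidem]
    _ = arr i j a := harr i j a

theorem e_mul_evalPath (hidem : ∀ i, e i * e i = e i)
    (harr : ∀ (i j : V) (a : Arr i j), e j * arr i j a * e i = arr i j a)
    {i j : V} (p : PathIn Arr i j) :
    e j * evalPath V Arr A e arr p = evalPath V Arr A e arr p := by
  cases p with
  | nil => simp only [evalPath]; exact hidem _
  | cons q a =>
    simp only [evalPath]
    rw [← mul_assoc, e_mul_arr hidem harr]

theorem evalPath_comp (hidem : ∀ i, e i * e i = e i)
    (harr : ∀ (i j : V) (a : Arr i j), e j * arr i j a * e i = arr i j a)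
    {i j l : V} (p : PathIn Arr i j) (q : PathIn Arr j l) :
    evalPath V Arr A e arr (p.comp q)
      = evalPath V Arr A e arr q * evalPath V Arr A e arr p := by
  induction q with
  | nil =>
    simp only [PathIn.comp, evalPath]
    rw [e_mul_evalPath hidem harr]
  | cons q a ih =>
    simp only [PathIn.comp, evalPath, ih, mul_assoc]

end AuxEval

open Module in
theorem pairing_equiv (k : Type) [Field k] (F1 F2 M : Type)
    [AddCommGroup F1] [Module k F1] [AddCommGroup F2] [Module k F2]
    [AddCommGroup M] [Module k M]
    [FiniteDimensional k F1] [FiniteDimensional k F2]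
    (B1 : F1 →ₗ[k] M →ₗ[k] k) (B2 : F2 →ₗ[k] M →ₗ[k] k)
    (h1 : ∀ α : F1, α ≠ 0 → ∃ u, B1 α u ≠ 0)
    (h2 : ∀ β : F2, β ≠ 0 → ∃ u, B2 β u ≠ 0)
    (h12 : ∀ u : M, (∀ α, B1 α u = 0) ↔ (∀ β, B2 β u = 0)) :
    ∃ T : F1 ≃ₗ[k] F2, ∀ (α : F1) (u : M), B2 (T α) u = B1 α u := by
  classical
  set K : Submodule k M := LinearMap.ker B1.flip with hK
  have hKmem : ∀ u : M, u ∈ K ↔ ∀ α, B1 α u = 0 := by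
    intro u
    simp [hK, LinearMap.mem_ker, LinearMap.ext_iff]
  have hK2 : K ≤ LinearMap.ker B2.flip := by
    intro u hu
    simp only [LinearMap.mem_ker]
    ext β
    simp only [LinearMap.flip_apply, LinearMap.zero_apply]
    exact (h12 u).mp ((hKmem u).mp hu) β
  have hK2' : LinearMap.ker B2.flip ≤ K := by
    intro u hu
    rw [hKmem]
    refine (h12 u).mpr fun β => ?_
    have := LinearMap.mem_ker.mp hu
    calc B2 β u = B2.flip u β := rfl
      _ = 0 := by rw [this]; rfl
  set B1q : (M ⧸ K) →ₗ[k] Module.Dual k F1 := K.liftQ B1.flip le_rfl with hB1q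
  set B2q : (M ⧸ K) →ₗ[k] Module.Dual k F2 := K.liftQ B2.flip hK2 with hB2q
  have hinj1 : Function.Injective B1q := by
    rw [← LinearMap.ker_eq_bot, hB1q]
    exact Submodule.ker_liftQ_eq_bot _ _ _ le_rfl
  have hinj2 : Function.Injective B2q := by
    rw [← LinearMap.ker_eq_bot, hB2q]
    exact Submodule.ker_liftQ_eq_bot _ _ _ hK2'
  haveI : FiniteDimensional k (M ⧸ K) := Module.Finite.of_injective B1q hinj1
  set D1 : F1 →ₗ[k] Module.Dual k (M ⧸ K) := B1q.flip with hD1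
  set D2 : F2 →ₗ[k] Module.Dual k (M ⧸ K) := B2q.flip with hD2
  have hD1app : ∀ (α : F1) (u : M), D1 α (Submodule.Quotient.mk u) = B1 α u := by
    intro α u
    show B1q (Submodule.Quotient.mk u) α = _
    rw [hB1q, Submodule.liftQ_apply]
    rfl
  have hD2app : ∀ (β : F2) (u : M), D2 β (Submodule.Quotient.mk u) = B2 β u := by
    intro β u
    show B2q (Submodule.Quotient.mk u) β = _
    rw [hB2q, Submodule.liftQ_apply]
    rfl
  have hinjD1 : Function.Injective D1 := by
    rw [← LinearMap.ker_eq_bot, LinearMap.ker_eq_bot']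
    intro α hα
    by_contra hne
    obtain ⟨u, hu⟩ := h1 α hne
    exact hu (by rw [← hD1app α u, hα]; rfl)
  have hinjD2 : Function.Injective D2 := by
    rw [← LinearMap.ker_eq_bot, LinearMap.ker_eq_bot']
    intro β hβ
    by_contra hne
    obtain ⟨u, hu⟩ := h2 β hne
    exact hu (by rw [← hD2app β u, hβ]; rfl)
  have hr1 : finrank k F1 = finrank k (M ⧸ K) := by
    have a1 : finrank k (M ⧸ K) ≤ finrank k F1 := by
      have := LinearMap.finrank_le_finrank_of_injective hinj1
      rwa [Subspace.dual_finrank_eq] at this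
    have a2 : finrank k F1 ≤ finrank k (M ⧸ K) := by
      have := LinearMap.finrank_le_finrank_of_injective hinjD1
      rwa [Subspace.dual_finrank_eq] at this
    omega
  have hr2 : finrank k F2 = finrank k (M ⧸ K) := by
    have a1 : finrank k (M ⧸ K) ≤ finrank k F2 := by
      have := LinearMap.finrank_le_finrank_of_injective hinj2
      rwa [Subspace.dual_finrank_eq] at this
    have a2 : finrank k F2 ≤ finrank k (M ⧸ K) := by
      have := LinearMap.finrank_le_finrank_of_injective hinjD2
      rwa [Subspace.dual_finrank_eq] at this
    omega
  have hsurj1 : Function.Surjective D1 :=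
    (LinearMap.injective_iff_surjective_of_finrank_eq_finrank
      (by rw [hr1, Subspace.dual_finrank_eq])).mp hinjD1
  have hsurj2 : Function.Surjective D2 :=
    (LinearMap.injective_iff_surjective_of_finrank_eq_finrank
      (by rw [hr2, Subspace.dual_finrank_eq])).mp hinjD2
  set E1 := LinearEquiv.ofBijective D1 ⟨hinjD1, hsurj1⟩ with hE1
  set E2 := LinearEquiv.ofBijective D2 ⟨hinjD2, hsurj2⟩ with hE2
  refine ⟨E1.trans E2.symm, fun α u => ?_⟩
  have key : D2 (E2.symm (E1 α)) = D1 α := by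
    have : E2 (E2.symm (E1 α)) = E1 α := E2.apply_symm_apply _
    calc D2 (E2.symm (E1 α)) = E2 (E2.symm (E1 α)) := rfl
      _ = E1 α := this
      _ = D1 α := rfl
  calc B2 ((E1.trans E2.symm) α) u = D2 (E2.symm (E1 α)) (Submodule.Quotient.mk u) :=
        (hD2app _ u).symm
    _ = D1 α (Submodule.Quotient.mk u) := by rw [key]
    _ = B1 α u := hD1app α u

end NTranslation

open NTranslation in
/-- **Lemma `exttra`.**  Let `Q` be an `n`-translation quiver
with translation `τ`, let `Λ = k(Q)`, and for each `i ∉ 𝒫` fix a bound path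
`p_i` of length `n+1` from `τ i` to `i`.  Then for any non-projective `i, j`
there is an isomorphism of vector spaces
`τ(i,j) : e_j kQ₁ e_i → e_{τj} kQ₁ e_{τi}` such that for any path `p` of
length `n` and any `α ∈ e_j kQ₁ e_i` satisfying `αp = p_j` in `Λ`, one has
`p·τ(i,j)(α) = p_i` in `Λ`. -/
theorem arrow_space_translation_isomorphism
    (k : Type) [Field k] (V : Type) (Arr : V → V → Type)
    (A : Type) [Ring A] [Algebra k A]
    (e : V → A) (arr : ∀ i j : V, Arr i j → A)
    (ρ : ∀ i j : V, Set (Comb k V Arr i j))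
    (hpres : IsBoundQuiverAlgebra k V Arr A e arr ρ)
    (n : ℕ) (P I : Set V) (τ : V → V)
    (htr : IsNTranslationQuiver k V Arr A e arr n P I τ)
    (pfix : ∀ i : V, i ∉ P → PathIn Arr (τ i) i)
    (hpfix : ∀ (i : V) (hi : i ∉ P), (pfix i hi).length = n + 1 ∧
      evalPath V Arr A e arr (pfix i hi) ≠ 0) :
    ∀ (i j : V) (hi : i ∉ P) (hj : j ∉ P),
      ∃ T : (Arr i j →₀ k) ≃ₗ[k] (Arr (τ i) (τ j) →₀ k),
        ∀ (α : Arr i j →₀ k) (p : PathIn Arr (τ j) i), p.length = n →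
          evalArrComb k V Arr A arr α * evalPath V Arr A e arr p =
            evalPath V Arr A e arr (pfix j hj) →
          evalPath V Arr A e arr p * evalArrComb k V Arr A arr (T α) =
            evalPath V Arr A e arr (pfix i hi) := by
  classical
  intro i j hi hj
  haveI : Finite (Arr i j) := hpres.locFin i j
  haveI : Finite (Arr (τ i) (τ j)) := hpres.locFin (τ i) (τ j)
  haveI : Fintype (Arr i j) := Fintype.ofFinite _
  haveI : Fintype (Arr (τ i) (τ j)) := Fintype.ofFinite _
  haveI : FiniteDimensional k (Arr i j →₀ k) :=
    Module.Finite.equiv (Finsupp.linearEquivFunOnFinite k k (Arr i j)).symm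
  haveI : FiniteDimensional k (Arr (τ i) (τ j) →₀ k) :=
    Module.Finite.equiv (Finsupp.linearEquivFunOnFinite k k (Arr (τ i) (τ j))).symm
  have hidem := hpres.idem
  have harr := hpres.arr_comp
  set xj : A := evalPath V Arr A e arr (pfix j hj) with hxjdef
  set xi : A := evalPath V Arr A e arr (pfix i hi) with hxidef
  have hxj : xj ≠ 0 := (hpfix j hj).2
  have hxi : xi ≠ 0 := (hpfix i hi).2
  -- linear-combination descriptions of the evaluations
  have hEC : ∀ (a b : V) (u : Comb k V Arr a b),
      evalComb k V Arr A e arr u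
        = Finsupp.linearCombination k
            (fun p : PathIn Arr a b => evalPath V Arr A e arr p) u := by
    intro a b u
    rw [Finsupp.linearCombination_apply]
    rfl
  have hEA : ∀ (a b : V) (w : Arr a b →₀ k),
      evalArrComb k V Arr A arr w = Finsupp.linearCombination k (arr a b) w := by
    intro a b w
    rw [Finsupp.linearCombination_apply]
    rfl
  have hECsingle : ∀ (a b : V) (p : PathIn Arr a b) (c : k),
      evalComb k V Arr A e arr (Finsupp.single p c)
        = c • evalPath V Arr A e arr p := by
    intro a b p c
    rw [hEC, Finsupp.linearCombination_single]
  have hEAsingle : ∀ (a b : V) (x : Arr a b) (c : k),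
      evalArrComb k V Arr A arr (Finsupp.single x c) = c • arr a b x := by
    intro a b x c
    rw [hEA, Finsupp.linearCombination_single]
  -- evaluation of arrow combinations reinterpreted as path combinations
  have hmapeval : ∀ (a b : V) (w : Arr a b →₀ k),
      evalComb k V Arr A e arr
          (Finsupp.mapDomain (fun x : Arr a b => PathIn.cons (PathIn.nil a) x) w)
        = evalArrComb k V Arr A arr w := by
    intro a b w
    rw [hEC, Finsupp.linearCombination_mapDomain, hEA]
    have hfun : ((fun p : PathIn Arr a b => evalPath V Arr A e arr p) ∘
        (fun x : Arr a b => PathIn.cons (PathIn.nil a) x)) = arr a b := by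
      funext x
      show evalPath V Arr A e arr (PathIn.cons (PathIn.nil a) x) = arr a b x
      simp only [evalPath]
      exact arr_mul_e hidem harr a b x
    rw [hfun]
  have hmapsupp : ∀ (a b : V) (w : Arr a b →₀ k),
      ∀ p ∈ (Finsupp.mapDomain
          (fun x : Arr a b => PathIn.cons (PathIn.nil a) x) w).support,
        PathIn.length p = 1 := by
    intro a b w p hp
    obtain ⟨x, hx, rfl⟩ := Finset.mem_image.mp (Finsupp.mapDomain_support hp)
    simp [PathIn.length]
  -- injectivity of the evaluation on arrow combinations
  have harrinj : ∀ (a b : V) (w : Arr a b →₀ k), w ≠ 0 →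
      evalArrComb k V Arr A arr w ≠ 0 := by
    intro a b w hw h0
    have hfinj : Function.Injective
        (fun x : Arr a b => PathIn.cons (PathIn.nil a) x) := by
      intro x y hxy
      obtain ⟨h1, h2, h3⟩ := PathIn.cons.inj hxy
      exact eq_of_heq h3
    have hker := (hpres.kernel a b (Finsupp.mapDomain
        (fun x : Arr a b => PathIn.cons (PathIn.nil a) x) w)).mp
      (by rw [hmapeval a b w]; exact h0)
    have hsup : Finsupp.mapDomain
        (fun x : Arr a b => PathIn.cons (PathIn.nil a) x) w
        ∈ Finsupp.supported k k {p : PathIn Arr a b | 2 ≤ PathIn.length p} := by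
      refine Submodule.span_le.mpr ?_ hker
      rintro z ⟨c, d, r, hr, v, w'', rfl⟩
      rw [SetLike.mem_coe, Finsupp.mem_supported]
      intro p hp
      obtain ⟨q, hq, rfl⟩ := Finset.mem_image.mp
        (Finsupp.mapDomain_support (Finset.mem_coe.mp hp))
      obtain ⟨t, ht2, hlen⟩ := hpres.homog c d r hr
      have hq' := hlen q hq
      simp only [Set.mem_setOf_eq]
      rw [PathIn.length_comp, PathIn.length_comp, hq']
      omega
    obtain ⟨x, hx⟩ := Finsupp.support_nonempty_iff.mpr hw
    have hx' : PathIn.cons (PathIn.nil a) x ∈ (Finsupp.mapDomain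
        (fun x : Arr a b => PathIn.cons (PathIn.nil a) x) w).support := by
      rw [Finsupp.mapDomain_support_of_injective hfinj]
      exact Finset.mem_image_of_mem _ hx
    have h2 := (Finsupp.mem_supported k _).mp hsup (Finset.mem_coe.mpr hx')
    simp only [Set.mem_setOf_eq, PathIn.length] at h2
    omega
  -- one-dimensionality of the top corner spaces
  have honej : ∀ q : PathIn Arr (τ j) j, PathIn.length q = n + 1 →
      evalPath V Arr A e arr q ∈ (k ∙ xj) := by
    intro q hq
    obtain ⟨c, d, hcd, hsum⟩ := htr.lin_dep j hj q (pfix j hj) hq (hpfix j hj).1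
    by_cases hc : c = 0
    · exfalso
      have hd : d ≠ 0 := fun h => hcd ⟨hc, h⟩
      rw [hc, zero_smul, zero_add] at hsum
      exact hxj ((smul_eq_zero.mp hsum).resolve_left hd)
    · rw [Submodule.mem_span_singleton]
      refine ⟨-(c⁻¹ * d), ?_⟩
      have h1 : c • evalPath V Arr A e arr q
          = -(d • evalPath V Arr A e arr (pfix j hj)) :=
        eq_neg_of_add_eq_zero_left hsum
      have h2 : evalPath V Arr A e arr q
          = c⁻¹ • (c • evalPath V Arr A e arr q) := by
        rw [smul_smul, inv_mul_cancel₀ hc, one_smul]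
      rw [← hxjdef] at h1
      rw [h2, h1, smul_neg, smul_smul, ← neg_smul]
  have honei : ∀ q : PathIn Arr (τ i) i, PathIn.length q = n + 1 →
      evalPath V Arr A e arr q ∈ (k ∙ xi) := by
    intro q hq
    obtain ⟨c, d, hcd, hsum⟩ := htr.lin_dep i hi q (pfix i hi) hq (hpfix i hi).1
    by_cases hc : c = 0
    · exfalso
      have hd : d ≠ 0 := fun h => hcd ⟨hc, h⟩
      rw [hc, zero_smul, zero_add] at hsum
      exact hxi ((smul_eq_zero.mp hsum).resolve_left hd)
    · rw [Submodule.mem_span_singleton]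
      refine ⟨-(c⁻¹ * d), ?_⟩
      have h1 : c • evalPath V Arr A e arr q
          = -(d • evalPath V Arr A e arr (pfix i hi)) :=
        eq_neg_of_add_eq_zero_left hsum
      have h2 : evalPath V Arr A e arr q
          = c⁻¹ • (c • evalPath V Arr A e arr q) := by
        rw [smul_smul, inv_mul_cancel₀ hc, one_smul]
      rw [← hxidef] at h1
      rw [h2, h1, smul_neg, smul_smul, ← neg_smul]
  -- products of arrow combinations with length-n combinations land in the corners
  have hmem1 : ∀ (α : Arr i j →₀ k) (u : Comb k V Arr (τ j) i),
      (∀ p ∈ u.support, PathIn.length p = n) →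
      evalArrComb k V Arr A arr α * evalComb k V Arr A e arr u ∈ (k ∙ xj) := by
    intro α u hu
    have h1 : evalComb k V Arr A e arr u
        = ∑ p ∈ u.support, u p • evalPath V Arr A e arr p := rfl
    rw [h1, Finset.mul_sum]
    refine Submodule.sum_mem _ fun p hp => ?_
    rw [mul_smul_comm]
    refine Submodule.smul_mem _ _ ?_
    have h2 : evalArrComb k V Arr A arr α
        = ∑ a ∈ α.support, α a • arr i j a := rfl
    rw [h2, Finset.sum_mul]
    refine Submodule.sum_mem _ fun a _ => ?_
    rw [smul_mul_assoc]
    refine Submodule.smul_mem _ _ ?_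
    have h3 : evalPath V Arr A e arr (PathIn.cons p a)
        = arr i j a * evalPath V Arr A e arr p := by simp only [evalPath]
    rw [← h3]
    refine honej _ ?_
    simp only [PathIn.length]
    rw [hu p hp]
  have hmem2 : ∀ (β : Arr (τ i) (τ j) →₀ k) (u : Comb k V Arr (τ j) i),
      (∀ p ∈ u.support, PathIn.length p = n) →
      evalComb k V Arr A e arr u * evalArrComb k V Arr A arr β ∈ (k ∙ xi) := by
    intro β u hu
    have h1 : evalComb k V Arr A e arr u
        = ∑ p ∈ u.support, u p • evalPath V Arr A e arr p := rfl
    rw [h1, Finset.sum_mul]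
    refine Submodule.sum_mem _ fun p hp => ?_
    rw [smul_mul_assoc]
    refine Submodule.smul_mem _ _ ?_
    have h2 : evalArrComb k V Arr A arr β
        = ∑ a ∈ β.support, β a • arr (τ i) (τ j) a := rfl
    rw [h2, Finset.mul_sum]
    refine Submodule.sum_mem _ fun a _ => ?_
    rw [mul_smul_comm]
    refine Submodule.smul_mem _ _ ?_
    have h3 : evalPath V Arr A e arr
        ((PathIn.cons (PathIn.nil (τ i)) a).comp p)
        = evalPath V Arr A e arr p * arr (τ i) (τ j) a := by
      rw [evalPath_comp hidem harr]
      simp only [evalPath]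
      rw [arr_mul_e hidem harr]
    rw [← h3]
    refine honei _ ?_
    rw [PathIn.length_comp]
    simp only [PathIn.length]
    rw [hu p hp]
    omega
  -- coordinate functionals
  obtain ⟨lj, hlj⟩ := LinearMap.exists_extend
    ((LinearEquiv.coord k A xj hxj).toLinearMap)
  obtain ⟨li, hli⟩ := LinearMap.exists_extend
    ((LinearEquiv.coord k A xi hxi).toLinearMap)
  have hlj' : ∀ y (hy : y ∈ (k ∙ xj)), lj y • xj = y := by
    intro y hy
    have h0 := LinearMap.congr_fun hlj (⟨y, hy⟩ : (k ∙ xj))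
    simp only [LinearMap.coe_comp, Function.comp_apply, Submodule.coe_subtype,
      LinearEquiv.coe_coe] at h0
    rw [h0]
    exact LinearEquiv.coord_apply_smul k A xj hxj ⟨y, hy⟩
  have hli' : ∀ y (hy : y ∈ (k ∙ xi)), li y • xi = y := by
    intro y hy
    have h0 := LinearMap.congr_fun hli (⟨y, hy⟩ : (k ∙ xi))
    simp only [LinearMap.coe_comp, Function.comp_apply, Submodule.coe_subtype,
      LinearEquiv.coe_coe] at h0
    rw [h0]
    exact LinearEquiv.coord_apply_smul k A xi hxi ⟨y, hy⟩
  -- the space of length-n combinations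
  set S : Set (PathIn Arr (τ j) i) := {p | PathIn.length p = n} with hSdef
  set C : Submodule k (Comb k V Arr (τ j) i) := Finsupp.supported k k S with hCdef
  have hCsupp : ∀ u : C, ∀ p ∈ (u : Comb k V Arr (τ j) i).support,
      PathIn.length p = n := by
    intro u p hp
    have h0 := (Finsupp.mem_supported k (u : Comb k V Arr (τ j) i)).mp u.2
      (Finset.mem_coe.mpr hp)
    rw [hSdef] at h0
    exact h0
  -- the two pairings
  set B1 : (Arr i j →₀ k) →ₗ[k] (C →ₗ[k] k) :=
    (LinearMap.llcomp k C A k lj).comp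
      ((LinearMap.lcomp k A
          ((Finsupp.linearCombination k
            (fun p : PathIn Arr (τ j) i => evalPath V Arr A e arr p)).comp
              C.subtype)).comp
        ((LinearMap.mul k A).comp (Finsupp.linearCombination k (arr i j)))) with hB1def
  set B2 : (Arr (τ i) (τ j) →₀ k) →ₗ[k] (C →ₗ[k] k) :=
    (LinearMap.llcomp k C A k li).comp
      ((LinearMap.lcomp k A
          ((Finsupp.linearCombination k
            (fun p : PathIn Arr (τ j) i => evalPath V Arr A e arr p)).comp
              C.subtype)).comp
        (((LinearMap.mul k A).flip).comp
          (Finsupp.linearCombination k (arr (τ i) (τ j))))) with hB2def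
  have hB1app : ∀ (α : Arr i j →₀ k) (u : C),
      B1 α u = lj (evalArrComb k V Arr A arr α
        * evalComb k V Arr A e arr (u : Comb k V Arr (τ j) i)) := by
    intro α u
    rw [hEA, hEC]
    rfl
  have hB2app : ∀ (β : Arr (τ i) (τ j) →₀ k) (u : C),
      B2 β u = li (evalComb k V Arr A e arr (u : Comb k V Arr (τ j) i)
        * evalArrComb k V Arr A arr β) := by
    intro β u
    rw [hEA, hEC]
    rfl
  have hB1key : ∀ (α : Arr i j →₀ k) (u : C),
      evalArrComb k V Arr A arr α
        * evalComb k V Arr A e arr (u : Comb k V Arr (τ j) i) = B1 α u • xj := by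
    intro α u
    rw [hB1app]
    exact (hlj' _ (hmem1 α _ (hCsupp u))).symm
  have hB2key : ∀ (β : Arr (τ i) (τ j) →₀ k) (u : C),
      evalComb k V Arr A e arr (u : Comb k V Arr (τ j) i)
        * evalArrComb k V Arr A arr β = B2 β u • xi := by
    intro β u
    rw [hB2app]
    exact (hli' _ (hmem2 β _ (hCsupp u))).symm
  -- arrow extraction from length-one paths
  have hlen1 : ∀ (a b : V) (q : PathIn Arr a b), PathIn.length q = 1 →
      ∃ x : Arr a b, evalPath V Arr A e arr q = arr a b x := by
    intro a b q hq
    cases q with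
    | nil => simp [PathIn.length] at hq
    | cons q' x =>
      cases q' with
      | nil =>
        refine ⟨x, ?_⟩
        simp only [evalPath]
        exact arr_mul_e hidem harr a b x
      | cons q'' y => simp [PathIn.length] at hq
  -- non-degeneracy in the first argument of B1
  have h1 : ∀ α : Arr i j →₀ k, α ≠ 0 → ∃ u : C, B1 α u ≠ 0 := by
    intro α hα
    have hbd : IsBoundElement k V Arr A e arr
        (Finsupp.mapDomain (fun x : Arr i j => PathIn.cons (PathIn.nil i) x) α) 1 :=
      ⟨hmapsupp i j α, by rw [hmapeval]; exact harrinj i j α hα⟩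
    obtain ⟨q, hqlen, hqne⟩ := htr.cond3 j hj i 1 (by omega) _ hbd
    have hqS : q ∈ S := by
      rw [hSdef]
      simp only [Set.mem_setOf_eq]
      omega
    set u : C := ⟨Finsupp.single q 1, by
      rw [hCdef]; exact Finsupp.single_mem_supported k 1 hqS⟩ with hu
    refine ⟨u, fun h0 => hqne ?_⟩
    have hk := hB1key α u
    rw [h0, zero_smul] at hk
    have hev : evalComb k V Arr A e arr (u : Comb k V Arr (τ j) i)
        = evalPath V Arr A e arr q := by
      show evalComb k V Arr A e arr (Finsupp.single q 1) = _
      rw [hECsingle, one_smul]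
    rw [hmapeval, ← hev]
    exact hk
  -- non-degeneracy in the first argument of B2
  have h2 : ∀ β : Arr (τ i) (τ j) →₀ k, β ≠ 0 → ∃ u : C, B2 β u ≠ 0 := by
    intro β hβ
    have hbd : IsBoundElement k V Arr A e arr
        (Finsupp.mapDomain
          (fun x : Arr (τ i) (τ j) => PathIn.cons (PathIn.nil (τ i)) x) β) 1 :=
      ⟨hmapsupp (τ i) (τ j) β, by rw [hmapeval]; exact harrinj (τ i) (τ j) β hβ⟩
    obtain ⟨i', hi', hτ, p, hplen, hpne⟩ := htr.cond4 (τ i)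
      (by simpa using htr.bij.mapsTo (by simpa using hi)) (τ j) 1 (by omega) _ hbd
    have hii : i = i' := (htr.bij.injOn (by simpa using hi') (by simpa using hi) hτ).symm
    subst hii
    have hpS : p ∈ S := by
      rw [hSdef]
      simp only [Set.mem_setOf_eq]
      omega
    set u : C := ⟨Finsupp.single p 1, by
      rw [hCdef]; exact Finsupp.single_mem_supported k 1 hpS⟩ with hu
    refine ⟨u, fun h0 => hpne ?_⟩
    have hk := hB2key β u
    rw [h0, zero_smul] at hk
    have hev : evalComb k V Arr A e arr (u : Comb k V Arr (τ j) i)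
        = evalPath V Arr A e arr p := by
      show evalComb k V Arr A e arr (Finsupp.single p 1) = _
      rw [hECsingle, one_smul]
    rw [hmapeval, ← hev]
    exact hk
  -- the radicals of the two pairings agree
  have h12 : ∀ u : C, (∀ α, B1 α u = 0) ↔ (∀ β, B2 β u = 0) := by
    intro u
    by_cases hz : evalComb k V Arr A e arr (u : Comb k V Arr (τ j) i) = 0
    · constructor
      · intro _ β
        rw [hB2app, hz, zero_mul, map_zero]
      · intro _ α
        rw [hB1app, hz, mul_zero, map_zero]
    · have hbd : IsBoundElement k V Arr A e arr
          (u : Comb k V Arr (τ j) i) n := ⟨hCsupp u, hz⟩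
      constructor
      · intro hB1z
        exfalso
        obtain ⟨i', hi', hτ, p, hplen, hpne⟩ := htr.cond4 (τ j)
          (by simpa using htr.bij.mapsTo (by simpa using hj)) i n (by omega) _ hbd
        have hij : j = i' := (htr.bij.injOn (by simpa using hi') (by simpa using hj) hτ).symm
        subst hij
        obtain ⟨x, hx⟩ := hlen1 i j p (by omega)
        apply hpne
        rw [hx]
        have hk := hB1key (Finsupp.single x 1) u
        rw [hB1z, zero_smul, hEAsingle, one_smul] at hk
        exact hk
      · intro hB2z
        exfalso
        obtain ⟨q, hqlen, hqne⟩ := htr.cond3 i hi (τ j) n (by omega) _ hbd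
        obtain ⟨x, hx⟩ := hlen1 (τ i) (τ j) q (by omega)
        apply hqne
        rw [hx]
        have hk := hB2key (Finsupp.single x 1) u
        rw [hB2z, zero_smul, hEAsingle, one_smul] at hk
        exact hk
  obtain ⟨T, hT⟩ := pairing_equiv k (Arr i j →₀ k) (Arr (τ i) (τ j) →₀ k) C B1 B2 h1 h2 h12
  refine ⟨T, ?_⟩
  intro α p hplen hpeq
  have hpS : p ∈ S := by
    rw [hSdef]
    simp only [Set.mem_setOf_eq]
    exact hplen
  set u : C := ⟨Finsupp.single p 1, by
    rw [hCdef]; exact Finsupp.single_mem_supported k 1 hpS⟩ with hu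
  have hev : evalComb k V Arr A e arr (u : Comb k V Arr (τ j) i)
      = evalPath V Arr A e arr p := by
    show evalComb k V Arr A e arr (Finsupp.single p 1) = _
    rw [hECsingle, one_smul]
  have hB1u : B1 α u = 1 := by
    have hk := hB1key α u
    rw [hev, hpeq] at hk
    have h2' : (B1 α u - 1) • xj = 0 := by
      rw [sub_smul, one_smul, ← hk, sub_self]
    rcases smul_eq_zero.mp h2' with h | h
    · exact sub_eq_zero.mp h
    · exact absurd h hxj
  have hB2u := hT α u
  rw [hB1u] at hB2u
  have hk := hB2key (T α) u
  rw [hB2u, one_smul, hev] at hk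
  exact hk
end
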